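/- Let k ≥ 2 be an integer, λ ∈ ℂ \ {0,1}, and h(ζ) = Σ_{m∈ℤ} a_m ζ^m a Laurent series convergent on the punctured unit disc whose principal part Σ_{m<0} a_m ζ^m converges on all of ℂ \ {0}. Then there exists a function β, holomorphic on the left half-plane and 2πi-periodic, such that the map w ↦ h(e^w) + β(kw) − λβ(w) equals w ↦ Σ_{m<0} a_m e^{mw}. Concretely, β(w) = χ(e^w) + a_0/(λ−1) where χ(ζ) = Σ_{l=0}^{∞} λ^{−(l+1)} h_+(ζ^{k^l}) with h_+(ζ) = Σ_{m>0} a_m ζ^m. -/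

import Mathlib

open Filter

/-- ratio-test summability of `l ↦ ‖lam‖⁻¹ ^ (l+1) * r ^ (k ^ l)`. -/
lemma kill_aux_ratio (lam : ℂ) (hlam0 : lam ≠ 0) (k : ℕ) (hk : 2 ≤ k)
    (r : ℝ) (hr0 : 0 < r) (hr1 : r < 1) :
    Summable (fun l : ℕ => ‖lam‖⁻¹ ^ (l + 1) * r ^ (k ^ l)) := by
  have hlampos : 0 < ‖lam‖⁻¹ := inv_pos.2 (norm_pos_iff.2 hlam0)
  have hv0 : ∀ l : ℕ, 0 < ‖lam‖⁻¹ ^ (l + 1) * r ^ (k ^ l) :=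
    fun l => mul_pos (pow_pos hlampos _) (pow_pos hr0 _)
  apply summable_of_ratio_norm_eventually_le (r := 1/2) (by norm_num)
  have h2 : Tendsto (fun l : ℕ => k ^ l * (k - 1)) atTop atTop :=
    tendsto_atTop_mono (fun l => Nat.le_mul_of_pos_right _ (by omega))
      (tendsto_pow_atTop_atTop_of_one_lt (by omega))
  have h1 : Tendsto (fun n : ℕ => r ^ n) atTop (nhds 0) :=
    tendsto_pow_atTop_nhds_zero_of_lt_one hr0.le hr1
  have h3 : Tendsto (fun l : ℕ => ‖lam‖⁻¹ * r ^ (k ^ l * (k - 1))) atTop (nhds 0) := by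
    have := (h1.comp h2).const_mul ‖lam‖⁻¹
    simpa using this
  filter_upwards [h3.eventually_lt_const (by norm_num : (0:ℝ) < 1/2)] with l hl
  rw [Real.norm_of_nonneg (hv0 _).le, Real.norm_of_nonneg (hv0 _).le]
  have hexp : k ^ (l + 1) = k ^ l * (k - 1) + k ^ l := by
    have hkk : k - 1 + 1 = k := by omega
    calc k ^ (l + 1) = k ^ l * k := pow_succ k l
      _ = k ^ l * (k - 1 + 1) := by rw [hkk]
      _ = k ^ l * (k - 1) + k ^ l := by ring
  have key : ‖lam‖⁻¹ ^ (l + 1 + 1) * r ^ (k ^ (l + 1))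
      = (‖lam‖⁻¹ * r ^ (k ^ l * (k - 1))) * (‖lam‖⁻¹ ^ (l + 1) * r ^ (k ^ l)) := by
    rw [hexp, pow_add, pow_succ]
    ring
  rw [key]
  exact mul_le_mul_of_nonneg_right hl.le (hv0 l).le

set_option maxHeartbeats 1000000 in
theorem kill_nonnegative_part (k : ℕ) (hk : 2 ≤ k) (lam : ℂ)
    (hlam0 : lam ≠ 0) (hlam1 : lam ≠ 1)
    (a : ℤ → ℂ) (h : ℂ → ℂ)
    (hh : ∀ ζ : ℂ, ζ ≠ 0 → ‖ζ‖ < 1 →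
      HasSum (fun m : ℤ => a m * ζ ^ m) (h ζ))
    (hprin : ∀ ζ : ℂ, ζ ≠ 0 →
      Summable (fun m : ℕ => a (-(m:ℤ) - 1) * ζ ^ (-(m:ℤ) - 1))) :
    ∃ β : ℂ → ℂ, DifferentiableOn ℂ β {w : ℂ | w.re < 0} ∧
      (∀ w : ℂ, w.re < 0 → β (w + 2 * Real.pi * Complex.I) = β w) ∧
      (∀ w : ℂ, w.re < 0 →
        h (Complex.exp w) + β ((k:ℂ) * w) - lam * β w =
          ∑' m : ℕ, a (-(m:ℤ) - 1) * Complex.exp ((-(m:ℤ) - 1) * w)) := by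
  classical
  -- term of the double series
  set t : ℕ × ℕ → ℂ → ℂ := fun p w =>
    (lam ^ (p.1 + 1))⁻¹ * a ((p.2 : ℤ) + 1) *
      Complex.exp ((((p.2 + 1) * k ^ p.1 : ℕ) : ℂ) * w) with ht
  -- coefficient bound
  have coeff : ∀ ρ : ℝ, 0 < ρ → ρ < 1 →
      ∃ C : ℝ, 0 ≤ C ∧ ∀ m : ℕ, ‖a ((m : ℤ) + 1)‖ * ρ ^ (m + 1) ≤ C := by
    intro ρ h0 h1
    have hsum : Summable (fun m : ℤ => a m * (ρ : ℂ) ^ m) :=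
      (hh ρ (by exact_mod_cast h0.ne') (by rwa [Complex.norm_real, Real.norm_of_nonneg h0.le])).summable
    have hinj : Function.Injective (fun m : ℕ => (m : ℤ) + 1) := by
      intro m n hmn; simpa using hmn
    have h2 : Summable (fun m : ℕ => a ((m : ℤ) + 1) * (ρ : ℂ) ^ ((m : ℤ) + 1)) :=
      hsum.comp_injective hinj
    have h3 : Tendsto (fun m : ℕ => ‖a ((m : ℤ) + 1)‖ * ρ ^ (m + 1)) atTop (nhds ‖(0:ℂ)‖) := by
      have := h2.tendsto_atTop_zero.norm
      convert this using 2 with m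
      have e1 : ((m : ℤ) + 1) = ((m + 1 : ℕ) : ℤ) := by push_cast; ring
      rw [norm_mul, e1, zpow_natCast, norm_pow, Complex.norm_real,
        Real.norm_of_nonneg h0.le]
    obtain ⟨C, hC⟩ := h3.bddAbove_range
    refine ⟨max C 0, le_max_right _ _, fun m => ?_⟩
    exact le_trans (hC (Set.mem_range_self m)) (le_max_left _ _)
  -- uniform bound on half-planes
  have key : ∀ s : ℝ, s < 0 → ∃ u : ℕ × ℕ → ℝ, Summable u ∧
      ∀ p : ℕ × ℕ, ∀ w : ℂ, w.re ≤ s → ‖t p w‖ ≤ u p := by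
    intro s hs
    set r : ℝ := Real.exp s with hrdef
    have hr0 : 0 < r := Real.exp_pos s
    have hr1 : r < 1 := Real.exp_lt_one_iff.2 hs
    set ρ : ℝ := (1 + r) / 2 with hρdef
    have hρ0 : 0 < ρ := by positivity
    have hρ1 : ρ < 1 := by rw [hρdef]; linarith
    have hrρ : r < ρ := by rw [hρdef]; linarith
    obtain ⟨C, hC0, hC⟩ := coeff ρ hρ0 hρ1
    clear_value r ρ
    refine ⟨fun p => (C / ρ * (‖lam‖⁻¹ ^ (p.1 + 1) * r ^ (k ^ p.1))) * (r / ρ) ^ p.2, ?_, ?_⟩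
    · have hgeo : Summable (fun m : ℕ => (r / ρ) ^ m) :=
        summable_geometric_of_lt_one (by positivity) ((div_lt_one hρ0).2 hrρ)
      have hl : Summable (fun l : ℕ => C / ρ * (‖lam‖⁻¹ ^ (l + 1) * r ^ (k ^ l))) :=
        (kill_aux_ratio lam hlam0 k hk r hr0 hr1).mul_left _
      exact hl.mul_of_nonneg hgeo (fun l => by positivity) (fun m => by positivity)
    · rintro ⟨l, m⟩ w hw
      have hN : ‖Complex.exp ((((m + 1) * k ^ l : ℕ) : ℂ) * w)‖
          ≤ r ^ (k ^ l) * r ^ m := by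
        have h1 : ‖Complex.exp ((((m + 1) * k ^ l : ℕ) : ℂ) * w)‖
            = Real.exp (((m + 1) * k ^ l : ℕ) * w.re) := by
          rw [Complex.norm_exp, Complex.mul_re,
            Complex.natCast_re, Complex.natCast_im]
          push_cast
          ring
        rw [h1]
        have h2 : Real.exp (((m + 1) * k ^ l : ℕ) * w.re)
            ≤ Real.exp (((m + 1) * k ^ l : ℕ) * s) :=
          Real.exp_le_exp.2 (mul_le_mul_of_nonneg_left hw (by positivity))
        have h3 : Real.exp (((m + 1) * k ^ l : ℕ) * s) = r ^ ((m + 1) * k ^ l) := by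
          rw [hrdef, ← Real.exp_nat_mul]
        have h4 : r ^ ((m + 1) * k ^ l) ≤ r ^ (k ^ l) * r ^ m := by
          have he : (m + 1) * k ^ l = k ^ l + m * k ^ l := by ring
          rw [he, pow_add]
          refine mul_le_mul_of_nonneg_left ?_ (by positivity)
          exact pow_le_pow_of_le_one hr0.le hr1.le
            (Nat.le_mul_of_pos_right _ (by positivity))
        calc Real.exp (((m + 1) * k ^ l : ℕ) * w.re) ≤ _ := h2
          _ = r ^ ((m + 1) * k ^ l) := h3
          _ ≤ r ^ (k ^ l) * r ^ m := h4
      have ha : ‖a ((m : ℤ) + 1)‖ ≤ C / ρ ^ (m + 1) :=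
        (le_div_iff₀ (pow_pos hρ0 _)).2 (hC m)
      have hnorm : ‖t (l, m) w‖ = ‖lam‖⁻¹ ^ (l + 1) *
          (‖a ((m : ℤ) + 1)‖ * ‖Complex.exp ((((m + 1) * k ^ l : ℕ) : ℂ) * w)‖) := by
        simp only [ht]
        rw [norm_mul, norm_mul, norm_inv, norm_pow]
        ring
      rw [hnorm]
      have hb : ‖a ((m : ℤ) + 1)‖ * ‖Complex.exp ((((m + 1) * k ^ l : ℕ) : ℂ) * w)‖
          ≤ (C / ρ ^ (m + 1)) * (r ^ (k ^ l) * r ^ m) :=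
        mul_le_mul ha hN (norm_nonneg _) (by positivity)
      have heq : ‖lam‖⁻¹ ^ (l + 1) * ((C / ρ ^ (m + 1)) * (r ^ (k ^ l) * r ^ m))
          = (C / ρ * (‖lam‖⁻¹ ^ (l + 1) * r ^ (k ^ l))) * (r / ρ) ^ m := by
        have hρne : ρ ≠ 0 := hρ0.ne'
        rw [div_pow, pow_succ]
        field_simp
        ring
      calc ‖lam‖⁻¹ ^ (l + 1) *
            (‖a ((m : ℤ) + 1)‖ * ‖Complex.exp ((((m + 1) * k ^ l : ℕ) : ℂ) * w)‖)
          ≤ ‖lam‖⁻¹ ^ (l + 1) * ((C / ρ ^ (m + 1)) * (r ^ (k ^ l) * r ^ m)) :=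
            mul_le_mul_of_nonneg_left hb (by positivity)
        _ = _ := heq
  -- the function β
  set β : ℂ → ℂ := fun w => (∑' p : ℕ × ℕ, t p w) + a 0 / (lam - 1) with hβ
  have htdiff : ∀ p : ℕ × ℕ, Differentiable ℂ (fun w => t p w) := by
    intro p
    exact ((differentiable_id.const_mul _).cexp).const_mul _
  refine ⟨β, ?_, ?_, ?_⟩
  · -- differentiability
    intro w hw
    have hw0 : w.re < 0 := hw
    have hs : w.re / 2 < 0 := by linarith
    obtain ⟨u, hu, hub⟩ := key (w.re / 2) hs
    have hU : IsOpen {z : ℂ | z.re < w.re / 2} :=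
      isOpen_lt Complex.continuous_re continuous_const
    have hd : DifferentiableOn ℂ (fun w => ∑' p : ℕ × ℕ, t p w) {z : ℂ | z.re < w.re / 2} :=
      Complex.differentiableOn_tsum_of_summable_norm hu
        (fun p => (htdiff p).differentiableOn) hU
        (fun p z hz => hub p z (le_of_lt hz))
    have hβd : DifferentiableOn ℂ β {z : ℂ | z.re < w.re / 2} := by
      simpa [hβ] using hd.add_const (a 0 / (lam - 1))
    have hwU : w ∈ {z : ℂ | z.re < w.re / 2} := by
      simp only [Set.mem_setOf_eq]
      linarith
    exact ((hβd.differentiableAt (hU.mem_nhds hwU)).differentiableWithinAt)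
  · -- periodicity
    intro w _
    simp only [hβ]
    congr 1
    apply tsum_congr
    rintro ⟨l, m⟩
    simp only [ht]
    congr 1
    rw [mul_add, Complex.exp_add]
    have h1 : Complex.exp ((((m + 1) * k ^ l : ℕ) : ℂ) * (2 * Real.pi * Complex.I)) = 1 := by
      have := Complex.exp_int_mul_two_pi_mul_I ((m + 1) * k ^ l : ℕ)
      simpa using this
    rw [h1, mul_one]
  · -- the functional equation
    intro w hw
    set ζ : ℂ := Complex.exp w with hζ
    have hζ0 : ζ ≠ 0 := Complex.exp_ne_zero w
    have hζ1 : ‖ζ‖ < 1 := by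
      rw [hζ, Complex.norm_exp]; exact Real.exp_lt_one_iff.2 hw
    have hsumZ := hh ζ hζ0 hζ1
    -- split the ℤ-sum
    have hposS : Summable (fun n : ℕ => a (n : ℤ) * ζ ^ (n : ℤ)) :=
      hsumZ.summable.comp_injective (fun m n hmn => by exact_mod_cast hmn)
    have hnegS : Summable (fun n : ℕ => a (-(n : ℤ) - 1) * ζ ^ (-(n : ℤ) - 1)) :=
      hprin ζ hζ0
    have ee : (fun n : ℕ => a (-((n : ℤ) + 1)) * ζ ^ (-((n : ℤ) + 1)))
        = (fun n : ℕ => a (-(n : ℤ) - 1) * ζ ^ (-(n : ℤ) - 1)) := by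
      funext n
      rw [show -((n : ℤ) + 1) = -(n : ℤ) - 1 by ring]
    have hB : HasSum (fun n : ℕ => a (-((n : ℤ) + 1)) * ζ ^ (-((n : ℤ) + 1)))
        (∑' m : ℕ, a (-(m : ℤ) - 1) * ζ ^ (-(m : ℤ) - 1)) := by
      rw [ee]; exact hnegS.hasSum
    have h5 : HasSum (fun m : ℤ => a m * ζ ^ m)
        ((∑' n : ℕ, a (n : ℤ) * ζ ^ (n : ℤ)) +
          ∑' m : ℕ, a (-(m : ℤ) - 1) * ζ ^ (-(m : ℤ) - 1)) :=
      HasSum.of_nat_of_neg_add_one hposS.hasSum hB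
    have hhval : h ζ = (∑' n : ℕ, a (n : ℤ) * ζ ^ (n : ℤ)) +
        ∑' m : ℕ, a (-(m : ℤ) - 1) * ζ ^ (-(m : ℤ) - 1) := hsumZ.unique h5
    -- F and the fiberwise sums
    set F : ℕ × ℕ → ℂ := fun p => (lam ^ p.1)⁻¹ * a ((p.2 : ℤ) + 1) *
      Complex.exp ((((p.2 + 1) * k ^ p.1 : ℕ) : ℂ) * w) with hF
    have hFt : ∀ p : ℕ × ℕ, F p = lam * t p w := by
      rintro ⟨l, m⟩
      simp only [hF, ht, pow_succ, mul_inv]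
      field_simp
    obtain ⟨u, hu, hub⟩ := key w.re hw
    have hTsum : Summable (fun p : ℕ × ℕ => t p w) :=
      Summable.of_norm_bounded hu (fun p => hub p w le_rfl)
    have hSF : Summable F := by
      have := hTsum.mul_left lam
      simpa [funext hFt] using this
    set G : ℕ → ℂ := fun l => ∑' m : ℕ, F (l, m) with hG
    have hGsl : ∀ l : ℕ, Summable (fun m : ℕ => F (l, m)) := fun l => hSF.prod_factor l
    have hGsum : HasSum G (∑' p : ℕ × ℕ, F p) :=
      hSF.hasSum.prod_fiberwise (fun l => (hGsl l).hasSum)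
    -- shifted sum
    have hinj2 : Function.Injective (fun p : ℕ × ℕ => (p.1 + 1, p.2)) := by
      rintro ⟨l, m⟩ ⟨l', m'⟩ hp
      simp only [Prod.mk.injEq] at hp
      exact Prod.ext (by omega) hp.2
    have hSF' : Summable (fun p : ℕ × ℕ => F (p.1 + 1, p.2)) :=
      hSF.comp_injective hinj2
    have hGsum' : HasSum (fun l : ℕ => G (l + 1)) (∑' p : ℕ × ℕ, F (p.1 + 1, p.2)) :=
      hSF'.hasSum.prod_fiberwise (fun l => (hGsl (l + 1)).hasSum)
    -- tsum of G splits
    have hGsplit : (∑' p : ℕ × ℕ, F p) = G 0 + ∑' p : ℕ × ℕ, F (p.1 + 1, p.2) := by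
      rw [← hGsum.tsum_eq, Summable.tsum_eq_zero_add hGsum.summable, hGsum'.tsum_eq]
    -- β(kw) and β(w)
    have hβk : (∑' p : ℕ × ℕ, t p ((k : ℂ) * w)) = ∑' p : ℕ × ℕ, F (p.1 + 1, p.2) := by
      apply tsum_congr
      rintro ⟨l, m⟩
      simp only [ht, hF]
      congr 2
      push_cast [pow_succ]
      ring
    have hβw : (∑' p : ℕ × ℕ, t p w) = lam⁻¹ * ∑' p : ℕ × ℕ, F p := by
      rw [← tsum_mul_left]
      apply tsum_congr
      intro p
      rw [hFt p]
      field_simp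
    -- identify G 0 with the positive part of h
    have hA : (∑' n : ℕ, a (n : ℤ) * ζ ^ (n : ℤ)) = a 0 + G 0 := by
      rw [Summable.tsum_eq_zero_add hposS]
      congr 1
      · simp
      · apply tsum_congr
        intro n
        simp only [hG, hF, pow_zero, inv_one, one_mul]
        have e1 : ((n + 1 : ℕ) : ℤ) = (n : ℤ) + 1 := by push_cast; ring
        rw [e1, show ((n : ℤ) + 1 : ℤ) = ((n : ℤ) + 1) from rfl]
        have e2 : ζ ^ ((n : ℤ) + 1) = Complex.exp ((((n + 1) * k ^ 0 : ℕ) : ℂ) * w) := by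
          rw [hζ, ← Complex.exp_int_mul]
          congr 1
          push_cast
          ring
        rw [e2]
        norm_num
    -- identify the negative part with the RHS
    have hBval : (∑' m : ℕ, a (-(m : ℤ) - 1) * ζ ^ (-(m : ℤ) - 1))
        = ∑' m : ℕ, a (-(m : ℤ) - 1) * Complex.exp ((-(m : ℤ) - 1 : ℂ) * w) := by
      apply tsum_congr
      intro m
      congr 1
      rw [hζ, ← Complex.exp_int_mul]
      norm_num
    -- final computation
    have hlam1' : lam - 1 ≠ 0 := sub_ne_zero.2 hlam1
    simp only [hβ]
    have e1 : lam * (lam⁻¹ * (G 0 + ∑' p : ℕ × ℕ, F (p.1 + 1, p.2)) + a 0 / (lam - 1))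
        = (G 0 + ∑' p : ℕ × ℕ, F (p.1 + 1, p.2)) + lam * (a 0 / (lam - 1)) := by
      rw [mul_add, ← mul_assoc, mul_inv_cancel₀ hlam0, one_mul]
    have e2 : a 0 + a 0 / (lam - 1) - lam * (a 0 / (lam - 1)) = 0 := by
      field_simp
      ring
    rw [hβk, hβw, hhval, hA, hBval, hGsplit, e1]
    linear_combination e2
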